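/- Let k be odd and f = Σ_{1≤i,j≤k} x_i y_j z_{[j-i]_k} w_{[i+j]_k}. Then f is a balanced neighborly polynomial of type (k,k,k,k): for every S ⊆ {1,2,3,4} with |S| ≤ 2, H(f,S) = k^{|S|}. -/

import Mathlib

open MvPolynomial

/-- `diffMon m f` is the result of applying the differential operator `∂^m` to `f`. -/
noncomputable def diffMon {K σ : Type*} [CommSemiring K] (m : σ →₀ ℕ)
    (f : MvPolynomial σ K) : MvPolynomial σ K :=
  ∑ m' ∈ f.support,
    ((∏ i ∈ m.support, ((m' i).descFactorial (m i) : K)) * coeff m' f) •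
      monomial (m' - m) (1 : K)

/-- `applyTo f g = g(∂₁,…,∂ₙ) f`, linear in `g`. -/
noncomputable def applyTo {K σ : Type*} [CommSemiring K] (f : MvPolynomial σ K) :
    MvPolynomial σ K →ₗ[K] MvPolynomial σ K :=
  Finsupp.lsum K (fun m => LinearMap.toSpanSingleton K (MvPolynomial σ K) (diffMon m f)) ∘ₗ
    (AddMonoidAlgebra.coeffLinearEquiv K).toLinearMap

/-- The multidegree of an exponent vector `m` with respect to the coloring `c`. -/
def mdeg {σ : Type*} {d : ℕ} (c : σ → Fin d) (m : σ →₀ ℕ) (i : Fin d) : ℕ :=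
  m.sum fun x k => if c x = i then k else 0

/-- The `ℤ^d`-graded component of the polynomial ring of multidegree `v`,
with respect to the coloring `c` of the variables. -/
noncomputable def componentSub (K : Type*) [CommSemiring K] {σ : Type*} {d : ℕ}
    (c : σ → Fin d) (v : Fin d → ℕ) : Submodule K (MvPolynomial σ K) :=
  Submodule.span K {p | ∃ m : σ →₀ ℕ, (∀ i, mdeg c m i = v i) ∧ p = monomial m (1 : K)}

/-- `Hdim f S` is `H(f,S)`, the dimension of `{g(∂)f : g ∈ R_{e_S}}`. -/
noncomputable def Hdim {K : Type*} [Field K] {σ : Type*} {d : ℕ} (c : σ → Fin d)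
    (f : MvPolynomial σ K) (S : Finset (Fin d)) : ℕ :=
  Module.finrank K ((componentSub K c (fun i => if i ∈ S then 1 else 0)).map (applyTo f))

-- ######## auxiliary development ########

set_option linter.unusedSectionVars false
set_option linter.unreachableTactic false
set_option linter.unusedTactic false

section Aux
variable {K : Type*} [Field K] {k : ℕ} [NeZero k]

lemma applyTo_monomial {σ : Type*} (f : MvPolynomial σ K) (m : σ →₀ ℕ) :
    applyTo f (monomial m 1) = diffMon m f := by
  rw [← single_eq_monomial, applyTo]
  refine (sum_monomial_eq (u := m) (r := (1 : K))
    (b := fun m r => LinearMap.toSpanSingleton K (MvPolynomial σ K) (diffMon m f) r)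
    (map_zero _)).trans ?_
  exact one_smul K (diffMon m f)

def vv (pq : ZMod k × ZMod k) : Fin 4 → ZMod k := ![pq.1, pq.2, pq.2 - pq.1, pq.1 + pq.2]

noncomputable def EE (pq : ZMod k × ZMod k) : (Fin 4 × ZMod k) →₀ ℕ :=
  ∑ a : Fin 4, Finsupp.single (a, vv pq a) 1

lemma EE_apply (pq : ZMod k × ZMod k) (a : Fin 4) (t : ZMod k) :
    EE pq (a, t) = if vv pq a = t then 1 else 0 := by
  classical
  rw [EE, Finsupp.finset_sum_apply]
  rw [Finset.sum_eq_single a]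
  · simp [Finsupp.single_apply, Prod.ext_iff]
  · intro b _ hb
    simp [Finsupp.single_apply, Prod.ext_iff, hb]
  · simp

lemma vv_eq_of_EE_eq {pq pq' : ZMod k × ZMod k} (h : EE pq = EE pq') (a : Fin 4) :
    vv pq a = vv pq' a := by
  have h1 : EE pq' (a, vv pq a) = 1 := by rw [← h, EE_apply]; simp
  rw [EE_apply] at h1
  by_contra hc
  rw [if_neg (fun h => hc h.symm)] at h1
  exact absurd h1 (by simp)

lemma EE_inj : Function.Injective (EE (k := k)) := by
  intro pq pq' h
  have h0 := vv_eq_of_EE_eq h 0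
  have h1 := vv_eq_of_EE_eq h 1
  simp [vv] at h0 h1
  exact Prod.ext h0 h1

end Aux

section Aux2
variable {K : Type*} [Field K] {k : ℕ} [NeZero k]

lemma two_unit (hk : Odd k) : IsUnit (2 : ZMod k) := by
  have : ((2 : ℕ) : ZMod k) = (2 : ZMod k) := by push_cast; ring
  rw [← this, ZMod.isUnit_iff_coprime]
  exact hk.coprime_two_left

lemma two_cancel (hk : Odd k) {x y : ZMod k} (h : 2 * x = 2 * y) : x = y :=
  (two_unit hk).mul_left_cancel h

lemma vv_pair_inj (hk : Odd k) {a b : Fin 4} (hab : a ≠ b) :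
    Function.Injective (fun pq : ZMod k × ZMod k => (vv pq a, vv pq b)) := by
  intro x y h
  rw [Prod.ext_iff] at h
  obtain ⟨h1, h2⟩ := h
  fin_cases a <;> fin_cases b <;> simp_all [vv]
  all_goals first
  | exact Prod.ext (by assumption) (by assumption)
  | { have hq : x.2 = y.2 := two_cancel hk (by linear_combination h1 + h2)
      have hp : x.1 = y.1 := by
        first
        | linear_combination hq - h1
        | linear_combination h1 - hq
        | linear_combination hq - h2
        | linear_combination h2 - hq
      exact Prod.ext hp hq }

end Aux2

section Aux3
variable (K : Type*) [Field K] (k : ℕ) [NeZero k]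

noncomputable def FF : MvPolynomial (Fin 4 × ZMod k) K :=
  ∑ pq : ZMod k × ZMod k, monomial (EE pq) 1

variable {K k}

lemma coeff_FF (m : (Fin 4 × ZMod k) →₀ ℕ) :
    coeff m (FF K k) = ∑ pq : ZMod k × ZMod k, if EE pq = m then (1 : K) else 0 := by
  rw [FF]
  simp [coeff_sum, coeff_monomial]

lemma coeff_FF_EE (pq : ZMod k × ZMod k) : coeff (EE pq) (FF K k) = 1 := by
  rw [coeff_FF, Finset.sum_eq_single pq]
  · simp
  · intro b _ hb
    rw [if_neg (fun h => hb (EE_inj h))]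
  · simp

lemma support_FF : (FF K k).support = Finset.univ.image EE := by
  ext m
  simp only [mem_support_iff, Finset.mem_image, Finset.mem_univ, true_and]
  constructor
  · intro h
    by_contra hc
    push_neg at hc
    rw [coeff_FF] at h
    exact h (Finset.sum_eq_zero fun pq _ => if_neg (hc pq))
  · rintro ⟨pq, rfl⟩
    rw [coeff_FF_EE]
    exact one_ne_zero

lemma diffMon_FF (m : (Fin 4 × ZMod k) →₀ ℕ) :
    diffMon m (FF K k) = ∑ pq : ZMod k × ZMod k,
      ((∏ x : Fin 4 × ZMod k, ((EE pq) x).descFactorial (m x) : ℕ) : K) •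
        monomial (EE pq - m) (1 : K) := by
  rw [diffMon, support_FF, Finset.sum_image (fun a _ b _ h => EE_inj h)]
  refine Finset.sum_congr rfl fun pq _ => ?_
  rw [coeff_FF_EE, mul_one]
  congr 1
  have h2 : (∏ i ∈ m.support, (((EE pq) i).descFactorial (m i) : K))
      = ∏ x : Fin 4 × ZMod k, (((EE pq) x).descFactorial (m x) : K) :=
    Finset.prod_subset (Finset.subset_univ _) fun x _ hx => by
      rw [Finsupp.notMem_support_iff.mp hx]; simp
  rw [h2, Nat.cast_prod]

end Aux3

section Aux4
variable {K : Type*} [Field K] {k : ℕ} [NeZero k]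

lemma mdeg_fst (m : (Fin 4 × ZMod k) →₀ ℕ) (i : Fin 4) :
    mdeg Prod.fst m i = ∑ t : ZMod k, m (i, t) := by
  classical
  rw [mdeg, Finsupp.sum_fintype _ _ (fun x => by simp)]
  rw [Fintype.sum_prod_type]
  rw [Finset.sum_eq_single i]
  · simp
  · intro b _ hb
    simp [hb]
  · simp

lemma sum_eq_zero_forall {g : ZMod k → ℕ} (h : ∑ t : ZMod k, g t = 0) :
    ∀ t, g t = 0 := by
  intro t
  exact (Finset.sum_eq_zero_iff.mp h) t (Finset.mem_univ t)

lemma sum_eq_one_exists {g : ZMod k → ℕ} (h : ∑ t : ZMod k, g t = 1) :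
    ∃ t, g t = 1 ∧ ∀ s, s ≠ t → g s = 0 := by
  classical
  have h0 : ∃ t ∈ Finset.univ, g t ≠ 0 := by
    apply Finset.exists_ne_zero_of_sum_ne_zero
    omega
  obtain ⟨t, _, ht⟩ := h0
  have hsplit : g t + ∑ s ∈ Finset.univ.erase t, g s = 1 := by
    rw [Finset.add_sum_erase _ _ (Finset.mem_univ t)]
    exact h
  refine ⟨t, by omega, fun s hs => ?_⟩
  have h2 : ∑ s ∈ Finset.univ.erase t, g s = 0 := by omega
  exact (Finset.sum_eq_zero_iff.mp h2) s (Finset.mem_erase.mpr ⟨hs, Finset.mem_univ s⟩)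

lemma linearIndependent_of_coeff {ι σ : Type*} [Fintype ι] [DecidableEq ι]
    (Fam : ι → MvPolynomial σ K) (μ : ι → (σ →₀ ℕ))
    (h : ∀ i j, coeff (μ i) (Fam j) = if i = j then 1 else 0) :
    LinearIndependent K Fam := by
  have hcomp : (fun j => (LinearMap.pi fun i => lcoeff K (μ i) :
      MvPolynomial σ K →ₗ[K] (ι → K)) (Fam j)) = fun j => Pi.single j (1 : K) := by
    funext j
    funext i
    simp only [LinearMap.pi_apply, lcoeff_apply, Pi.single_apply]
    exact h i j
  have : LinearIndependent K (fun j => Pi.single j (1 : K) : ι → (ι → K)) := by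
    have h4 := (Pi.basisFun K ι).linearIndependent
    rwa [show ⇑(Pi.basisFun K ι) = fun j => Pi.single j (1 : K) from
      funext fun j => Pi.basisFun_apply K ι j] at h4
  exact LinearIndependent.of_comp _ (hcomp ▸ this)

lemma finrank_map_eq {σ : Type*} {d : ℕ} (c : σ → Fin d) {ι : Type*} [Fintype ι]
    (v : Fin d → ℕ) (g : ι → (σ →₀ ℕ)) (f : MvPolynomial σ K)
    (h1 : ∀ t i, mdeg c (g t) i = v i)
    (h2 : ∀ m : σ →₀ ℕ, (∀ i, mdeg c m i = v i) → ∃ t, m = g t)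
    (h3 : LinearIndependent K fun t => diffMon (g t) f) :
    Module.finrank K ((componentSub K c v).map (applyTo f)) = Fintype.card ι := by
  have himg : (componentSub K c v).map (applyTo f)
      = Submodule.span K (Set.range fun t => diffMon (g t) f) := by
    rw [componentSub, Submodule.map_span]
    congr 1
    ext p
    constructor
    · rintro ⟨q, ⟨m, hm, rfl⟩, rfl⟩
      obtain ⟨t, rfl⟩ := h2 m hm
      exact ⟨t, (applyTo_monomial f (g t)).symm⟩
    · rintro ⟨t, rfl⟩
      exact ⟨monomial (g t) 1, ⟨g t, h1 t, rfl⟩, applyTo_monomial f (g t)⟩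
  rw [himg]
  exact finrank_span_eq_card h3

end Aux4

section Aux5
variable {K : Type*} [Field K] {k : ℕ} [NeZero k]

lemma prod_df_zero (n : Fin 4 × ZMod k → ℕ) :
    ∏ x : Fin 4 × ZMod k, (n x).descFactorial ((0 : (Fin 4 × ZMod k) →₀ ℕ) x) = 1 := by
  simp

lemma prod_df_single (n : Fin 4 × ZMod k → ℕ) (u : Fin 4 × ZMod k) :
    ∏ x : Fin 4 × ZMod k, (n x).descFactorial ((Finsupp.single u 1) x) = n u := by
  classical
  rw [← Finset.prod_subset (Finset.subset_univ {u}) (fun x _ hx => ?_)]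
  · rw [Finset.prod_singleton, Finsupp.single_eq_same, Nat.descFactorial_one]
  · rw [Finsupp.single_eq_of_ne' (Ne.symm (by simpa using hx))]
    simp

lemma prod_df_pair (n : Fin 4 × ZMod k → ℕ) (u w : Fin 4 × ZMod k) (huw : u ≠ w) :
    ∏ x : Fin 4 × ZMod k,
      (n x).descFactorial ((Finsupp.single u 1 + Finsupp.single w 1 :
        (Fin 4 × ZMod k) →₀ ℕ) x) = n u * n w := by
  classical
  rw [← Finset.prod_subset (Finset.subset_univ {u, w}) (fun x _ hx => ?_)]
  · rw [Finset.prod_pair huw, Finsupp.add_apply, Finsupp.add_apply,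
      Finsupp.single_eq_same, Finsupp.single_eq_same,
      Finsupp.single_eq_of_ne' huw, Finsupp.single_eq_of_ne' (Ne.symm huw),
      add_zero, zero_add, Nat.descFactorial_one, Nat.descFactorial_one]
  · simp only [Finset.mem_insert, Finset.mem_singleton, not_or] at hx
    rw [Finsupp.add_apply, Finsupp.single_eq_of_ne' (Ne.symm hx.1),
      Finsupp.single_eq_of_ne' (Ne.symm hx.2)]
    simp

lemma residual_inj (hk : Odd k) {c d : Fin 4} (hcd : c ≠ d) {pq pq' : ZMod k × ZMod k}
    {r r' : (Fin 4 × ZMod k) →₀ ℕ}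
    (hr : ∀ t, r (c, t) = 0 ∧ r (d, t) = 0) (hr' : ∀ t, r' (c, t) = 0 ∧ r' (d, t) = 0)
    (h : EE pq - r = EE pq' - r') : pq = pq' := by
  have key : ∀ e : Fin 4, (∀ t, r (e, t) = 0) → (∀ t, r' (e, t) = 0) →
      vv pq' e = vv pq e := by
    intro e he he'
    have h1 : (EE pq - r) (e, vv pq e) = (EE pq' - r') (e, vv pq e) := by rw [h]
    rw [Finsupp.tsub_apply, Finsupp.tsub_apply, he, he', EE_apply, EE_apply] at h1
    simp only [if_pos rfl, Nat.sub_zero] at h1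
    by_contra hne
    rw [if_neg hne] at h1
    exact absurd h1.symm (by simp)
  have hc := key c (fun t => (hr t).1) (fun t => (hr' t).1)
  have hd := key d (fun t => (hr t).2) (fun t => (hr' t).2)
  exact vv_pair_inj hk hcd (Prod.ext hc.symm hd.symm)

lemma exists_compl_one : ∀ a : Fin 4, ∃ c d : Fin 4, c ≠ d ∧ c ≠ a ∧ d ≠ a := by decide

lemma exists_compl_two : ∀ a b : Fin 4, a ≠ b →
    ∃ c d : Fin 4, c ≠ d ∧ c ≠ a ∧ c ≠ b ∧ d ≠ a ∧ d ≠ b := by decide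

lemma sum_single_apply (a b : Fin 4) (j : ZMod k) :
    ∑ t : ZMod k, (Finsupp.single (a, j) (1 : ℕ)) (b, t) = if b = a then 1 else 0 := by
  classical
  by_cases h : b = a
  · subst h
    rw [Finset.sum_eq_single j]
    · simp
    · intro t _ ht
      exact Finsupp.single_eq_of_ne' (by simp [Ne.symm ht])
    · simp
  · rw [if_neg h]
    exact Finset.sum_eq_zero fun t _ =>
      Finsupp.single_eq_of_ne' (by simp [Ne.symm h])

end Aux5

section CaseEmpty
variable {K : Type*} [Field K] {k : ℕ} [NeZero k]

lemma diffMon_zero_FF : diffMon (0 : (Fin 4 × ZMod k) →₀ ℕ) (FF K k) = FF K k := by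
  rw [diffMon_FF, FF]
  refine Finset.sum_congr rfl fun pq _ => ?_
  rw [prod_df_zero]
  simp

lemma case_empty :
    Module.finrank K ((componentSub K (Prod.fst : Fin 4 × ZMod k → Fin 4)
      (fun _ => 0)).map (applyTo (FF K k))) = 1 := by
  have h := finrank_map_eq (Prod.fst : Fin 4 × ZMod k → Fin 4) (ι := Unit)
    (fun _ => 0) (fun _ => 0) (FF K k) ?_ ?_ ?_
  · simpa using h
  · intro t i
    rw [mdeg_fst]
    simp
  · intro m hm
    refine ⟨(), Finsupp.ext fun x => ?_⟩
    obtain ⟨a, t⟩ := x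
    have := sum_eq_zero_forall ((mdeg_fst m a).symm.trans (hm a)) t
    simpa using this
  · apply linearIndependent_of_coeff _ (fun _ : Unit => EE ((0 : ZMod k), (0 : ZMod k)))
    intro i j
    rw [diffMon_zero_FF, coeff_FF_EE]
    simp

end CaseEmpty

section CaseSingle
variable {K : Type*} [Field K] {k : ℕ} [NeZero k]

def ww (a : Fin 4) (i : ZMod k) : ZMod k × ZMod k := if a = 0 then (i, 0) else (0, i)

lemma vv_ww (a : Fin 4) (i : ZMod k) : vv (ww a i) a = i := by
  fin_cases a <;> simp [vv, ww]

lemma single_col_zero {a b : Fin 4} (hba : b ≠ a) (j : ZMod k) (t : ZMod k) :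
    (Finsupp.single ((a, j) : Fin 4 × ZMod k) (1 : ℕ)) (b, t) = 0 :=
  Finsupp.single_eq_of_ne' (by simp [Ne.symm hba])

lemma diffMon_single (a : Fin 4) (j : ZMod k) :
    diffMon (Finsupp.single ((a, j) : Fin 4 × ZMod k) 1) (FF K k) = ∑ pq : ZMod k × ZMod k,
      ((if vv pq a = j then 1 else 0 : ℕ) : K) •
        monomial (EE pq - Finsupp.single (a, j) 1) 1 := by
  rw [diffMon_FF]
  refine Finset.sum_congr rfl fun pq _ => ?_
  rw [prod_df_single, EE_apply]

lemma case_single (hk : Odd k) (a : Fin 4) :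
    Module.finrank K ((componentSub K (Prod.fst : Fin 4 × ZMod k → Fin 4)
      (fun i => if i ∈ ({a} : Finset (Fin 4)) then 1 else 0)).map (applyTo (FF K k))) = k := by
  have h := finrank_map_eq (Prod.fst : Fin 4 × ZMod k → Fin 4) (ι := ZMod k)
    (fun i => if i ∈ ({a} : Finset (Fin 4)) then 1 else 0)
    (fun i => Finsupp.single ((a, i) : Fin 4 × ZMod k) (1 : ℕ)) (FF K k) ?_ ?_ ?_
  · rw [h, ZMod.card]
  · intro t i
    rw [mdeg_fst, sum_single_apply]
    simp [Finset.mem_singleton]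
  · intro m hm
    have ha : ∑ t : ZMod k, m (a, t) = 1 := by
      have := hm a
      rw [mdeg_fst] at this
      simpa using this
    obtain ⟨t₀, ht1, ht0⟩ := sum_eq_one_exists ha
    have hb : ∀ b : Fin 4, b ≠ a → ∀ t, m (b, t) = 0 := by
      intro b hba t
      have := hm b
      rw [mdeg_fst] at this
      simp [hba] at this
      exact this t
    refine ⟨t₀, Finsupp.ext fun x => ?_⟩
    obtain ⟨b, t⟩ := x
    by_cases hba : b = a
    · subst hba
      by_cases ht : t = t₀
      · subst ht
        rw [ht1, Finsupp.single_eq_same]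
      · rw [ht0 t ht, Finsupp.single_eq_of_ne' (by simp [Ne.symm ht])]
    · rw [hb b hba t, single_col_zero hba]
  · obtain ⟨c, d, hcd, hca, hda⟩ := exists_compl_one a
    apply linearIndependent_of_coeff _
      (fun i => EE (ww a i) - Finsupp.single ((a, i) : Fin 4 × ZMod k) 1)
    intro i j
    rw [diffMon_single]
    rw [coeff_sum]
    simp only [coeff_smul, coeff_monomial, smul_eq_mul]
    have key : ∀ pq : ZMod k × ZMod k,
        ((if vv pq a = j then 1 else 0 : ℕ) : K) *
          (if EE pq - Finsupp.single (a, j) 1 = EE (ww a i) - Finsupp.single (a, i) 1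
            then (1 : K) else 0)
        = if pq = ww a i ∧ i = j then 1 else 0 := by
      intro pq
      by_cases h1 : vv pq a = j
      · by_cases h2 : EE pq - Finsupp.single (a, j) 1
            = EE (ww a i) - Finsupp.single (a, i) 1
        · have hpq : pq = ww a i := by
            refine residual_inj hk hcd
              (fun t => ⟨single_col_zero hca j t, single_col_zero hda j t⟩)
              (fun t => ⟨single_col_zero hca i t, single_col_zero hda i t⟩) h2
          have hij : i = j := by rw [← h1, hpq, vv_ww]
          simp [h2, hpq, hij, vv_ww]
        · rw [if_neg h2, mul_zero, if_neg]
          rintro ⟨rfl, rfl⟩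
          exact h2 rfl
      · rw [if_neg h1, Nat.cast_zero, zero_mul, if_neg]
        rintro ⟨rfl, rfl⟩
        exact h1 (vv_ww a i)
    rw [Finset.sum_congr rfl fun pq _ => key pq]
    by_cases hij : i = j
    · subst hij
      simp
    · simp [hij]

end CaseSingle

section CasePair
variable {K : Type*} [Field K] {k : ℕ} [NeZero k]

noncomputable def gg (a b : Fin 4) (pq : ZMod k × ZMod k) : (Fin 4 × ZMod k) →₀ ℕ :=
  Finsupp.single (a, vv pq a) 1 + Finsupp.single (b, vv pq b) 1

lemma gg_col_zero {a b e : Fin 4} (hea : e ≠ a) (heb : e ≠ b) (pq : ZMod k × ZMod k)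
    (t : ZMod k) : gg a b pq (e, t) = 0 := by
  rw [gg, Finsupp.add_apply, single_col_zero hea, single_col_zero heb]

lemma pair_ne {a b : Fin 4} (hab : a ≠ b) (s t : ZMod k) :
    ((a, s) : Fin 4 × ZMod k) ≠ (b, t) := fun h => hab (congrArg Prod.fst h)

lemma diffMon_gg (hk : Odd k) {a b : Fin 4} (hab : a ≠ b) (pq : ZMod k × ZMod k) :
    diffMon (gg a b pq) (FF K k) = monomial (EE pq - gg a b pq) 1 := by
  rw [diffMon_FF, Finset.sum_eq_single pq]
  · rw [gg, prod_df_pair _ _ _ (pair_ne hab _ _), EE_apply, EE_apply]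
    simp
  · intro pq' _ hne
    rw [gg, prod_df_pair _ _ _ (pair_ne hab _ _), EE_apply, EE_apply]
    by_cases h1 : vv pq' a = vv pq a
    · by_cases h2 : vv pq' b = vv pq b
      · exact absurd (vv_pair_inj hk hab (Prod.ext h1 h2)) hne
      · simp [h2]
    · simp [h1]
  · simp

lemma case_pair (hk : Odd k) {a b : Fin 4} (hab : a ≠ b) :
    Module.finrank K ((componentSub K (Prod.fst : Fin 4 × ZMod k → Fin 4)
      (fun i => if i ∈ ({a, b} : Finset (Fin 4)) then 1 else 0)).map
        (applyTo (FF K k))) = k * k := by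
  have h := finrank_map_eq (Prod.fst : Fin 4 × ZMod k → Fin 4) (ι := ZMod k × ZMod k)
    (fun i => if i ∈ ({a, b} : Finset (Fin 4)) then 1 else 0) (gg a b) (FF K k) ?_ ?_ ?_
  · rw [h]
    simp [ZMod.card]
  · intro pq e
    rw [mdeg_fst]
    have hstep : ∑ t : ZMod k, gg a b pq (e, t)
        = (if e = a then 1 else 0) + (if e = b then 1 else 0) := by
      simp only [gg, Finsupp.add_apply, Finset.sum_add_distrib, sum_single_apply]
    rw [hstep]
    by_cases h1 : e = a
    · subst h1
      simp [hab]
    · by_cases h2 : e = b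
      · subst h2
        simp [h1]
      · simp [h1, h2]
  · intro m hm
    have hsum : ∀ e : Fin 4, ∑ t : ZMod k, m (e, t)
        = if e ∈ ({a, b} : Finset (Fin 4)) then 1 else 0 := fun e => by
      rw [← mdeg_fst]; exact hm e
    have haa : ∑ t : ZMod k, m (a, t) = 1 := by rw [hsum a, if_pos (by simp)]
    have hbb : ∑ t : ZMod k, m (b, t) = 1 := by rw [hsum b, if_pos (by simp)]
    obtain ⟨s, hs1, hs0⟩ := sum_eq_one_exists haa
    obtain ⟨t, ht1, ht0⟩ := sum_eq_one_exists hbb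
    obtain ⟨pq, hpq1, hpq2⟩ : ∃ pq : ZMod k × ZMod k, vv pq a = s ∧ vv pq b = t := by
      obtain ⟨pq, hpq⟩ :=
        (Finite.injective_iff_bijective.mp (vv_pair_inj hk hab)).surjective (s, t)
      exact ⟨pq, congrArg Prod.fst hpq, congrArg Prod.snd hpq⟩
    refine ⟨pq, Finsupp.ext fun x => ?_⟩
    obtain ⟨e, u⟩ := x
    by_cases hea : e = a
    · subst hea
      rw [gg, Finsupp.add_apply, single_col_zero hab, add_zero, hpq1]
      by_cases hu : u = s
      · subst hu
        rw [hs1, Finsupp.single_eq_same]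
      · rw [hs0 u hu, Finsupp.single_eq_of_ne' (by simp [Ne.symm hu])]
    · by_cases heb : e = b
      · subst heb
        rw [gg, Finsupp.add_apply, single_col_zero (Ne.symm hab), zero_add, hpq2]
        by_cases hu : u = t
        · subst hu
          rw [ht1, Finsupp.single_eq_same]
        · rw [ht0 u hu, Finsupp.single_eq_of_ne' (by simp [Ne.symm hu])]
      · rw [gg_col_zero hea heb]
        have := hsum e
        rw [if_neg (by simp [hea, heb])] at this
        exact sum_eq_zero_forall this u
  · obtain ⟨c, d, hcd, hca, hcb, hda, hdb⟩ := exists_compl_two a b hab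
    apply linearIndependent_of_coeff _ (fun pq => EE pq - gg a b pq)
    intro pq pq'
    rw [diffMon_gg hk hab, coeff_monomial]
    by_cases h : pq = pq'
    · simp [h]
    · rw [if_neg h, if_neg]
      intro heq
      exact h (residual_inj hk hcd
        (fun t => ⟨gg_col_zero hca hcb pq' t, gg_col_zero hda hdb pq' t⟩)
        (fun t => ⟨gg_col_zero hca hcb pq t, gg_col_zero hda hdb pq t⟩) heq).symm

end CasePair

section Main
variable {K : Type*} [Field K] {k : ℕ} [NeZero k]

lemma FF_eq : (∑ i : ZMod k, ∑ j : ZMod k,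
    (X ((0 : Fin 4), i) * X ((1 : Fin 4), j) *
      X ((2 : Fin 4), j - i) * X ((3 : Fin 4), i + j) : MvPolynomial (Fin 4 × ZMod k) K))
    = FF K k := by
  rw [FF, Fintype.sum_prod_type]
  refine Finset.sum_congr rfl fun i _ => Finset.sum_congr rfl fun j _ => ?_
  have hX : ∀ p : Fin 4 × ZMod k, (X p : MvPolynomial (Fin 4 × ZMod k) K)
      = monomial (Finsupp.single p 1) 1 := fun p => rfl
  rw [hX, hX, hX, hX, monomial_mul, monomial_mul, monomial_mul]
  rw [EE]
  rw [Fin.sum_univ_four]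
  simp [vv, add_assoc]

theorem stmt15' (hk : Odd k) :
    ∀ S : Finset (Fin 4), S.card ≤ 2 →
      Hdim (Prod.fst : Fin 4 × ZMod k → Fin 4)
        (∑ i : ZMod k, ∑ j : ZMod k,
          (X ((0 : Fin 4), i) * X ((1 : Fin 4), j) *
            X ((2 : Fin 4), j - i) * X ((3 : Fin 4), i + j) : MvPolynomial (Fin 4 × ZMod k) K))
        S = k ^ S.card := by
  intro S hS
  rw [FF_eq, Hdim]
  obtain h0 | h1 | h2 : S.card = 0 ∨ S.card = 1 ∨ S.card = 2 := by omega
  · rw [Finset.card_eq_zero] at h0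
    subst h0
    have hv : (fun i => if i ∈ (∅ : Finset (Fin 4)) then 1 else 0) = fun _ : Fin 4 => (0 : ℕ) := by
      funext i; simp
    rw [hv, case_empty]
    simp
  · obtain ⟨a, rfl⟩ := Finset.card_eq_one.mp h1
    rw [case_single hk a]
    simp
  · obtain ⟨a, b, hab, rfl⟩ := Finset.card_eq_two.mp h2
    rw [case_pair hk hab, h2, pow_two]

end Main

/-- For odd `k`, `f = Σ_{i,j} xᵢ yⱼ z_{j-i} w_{i+j}` is a balanced neighborly polynomial
of type `(k,k,k,k)`: `H(f,S) = k^{|S|}` for all `S ⊆ {1,2,3,4}` with `|S| ≤ 2`. -/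
theorem stmt15 (K : Type*) [Field K] (k : ℕ) [NeZero k] (hk : Odd k) :
    ∀ S : Finset (Fin 4), S.card ≤ 2 →
      Hdim (Prod.fst : Fin 4 × ZMod k → Fin 4)
        (∑ i : ZMod k, ∑ j : ZMod k,
          (X ((0 : Fin 4), i) * X ((1 : Fin 4), j) *
            X ((2 : Fin 4), j - i) * X ((3 : Fin 4), i + j) : MvPolynomial (Fin 4 × ZMod k) K))
        S = k ^ S.card := by
  exact stmt15' hk
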